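/- Let C be a ℂ-linear abelian braided monoidal category with simple unit object, biexact tensor product, finite-dimensional Hom-spaces, in which every object has finite length. Let G be a finite abelian group, {S_g}_{g∈G} a family of simple invertible objects with S_e = 𝟙, and let E be a commutative algebra object of C whose underlying object is ⨁_{g∈G} S_g, whose unit ι : 𝟙 → E is the inclusion of the summand S_e, and whose multiplication μ_E restricts to a nonzero morphism S_g ⊗ S_h → S_{gh} for all g, h ∈ G (condition (S1)). Assume the G-action on isomorphism classes of simple objects of C given by g·[M] = [S_g ⊗ M] is fixed-point free (condition (S2): S_g ⊗ M ≅ M for some simple M implies g = e). Then for every simple object M of C, the induced E-module F(M) = E ⊗ M, with action map (μ_E ⊗ id_M) composed with the associativity isomorphism E ⊗ (E ⊗ M) ≅ (E ⊗ E) ⊗ M, is a simple object of the category Rep(E) of E-modules. -/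

import Mathlib

open CategoryTheory MonoidalCategory Limits

/-- The free (induced) `E`-module `F(M) = E ⊗ M` on an object `M`, with action
`(μ_E ⊗ id_M)` composed with the associativity isomorphism
`E ⊗ (E ⊗ M) ≅ (E ⊗ E) ⊗ M`. -/
def freeMod {C : Type*} [Category C] [MonoidalCategory C] (E : Mon C) (M : C) :
    Mod C E.X where
  X := E.X ⊗ M
  mod := {
  smul := (α_ E.X E.X M).inv ≫ (E.mon.mul ▷ M)
  one_smul := by
    dsimp
    slice_lhs 1 2 => rw [associator_inv_naturality_left]
    slice_lhs 2 3 => rw [← comp_whiskerRight, MonObj.one_mul]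
    rw [← leftUnitor_tensor_hom]
  mul_smul := by
    dsimp
    slice_lhs 1 2 => rw [associator_inv_naturality_left]
    slice_lhs 2 3 => rw [← comp_whiskerRight, MonObj.mul_assoc]
    simp only [comp_whiskerRight, Category.assoc, MonoidalCategory.whiskerLeft_comp]
    slice_rhs 3 4 => rw [associator_inv_naturality_middle]
    have pent : (α_ (E.X ⊗ E.X) E.X M).inv ≫ ((α_ E.X E.X E.X).hom ▷ M) =
        (α_ E.X E.X (E.X ⊗ M)).hom ≫ (E.X ◁ (α_ E.X E.X M).inv) ≫
          (α_ E.X (E.X ⊗ E.X) M).inv := by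
      monoidal
    slice_lhs 1 2 => rw [pent]
    simp only [Category.assoc] }

/-- An object `N` of `Rep(E) = Mod C E.X` is simple: it is nonzero, and every monomorphism
into it is either an isomorphism or has zero source. -/
def IsSimpleMod {C : Type*} [Category C] [MonoidalCategory C] {E : Mon C}
    (N : Mod C E.X) : Prop :=
  ¬ IsZero N ∧ ∀ (P : Mod C E.X) (f : P ⟶ N), Mono f → (IsIso f ∨ IsZero P)


attribute [reducible] freeMod

section AuxMonoidal
variable {C : Type*} [Category C] [MonoidalCategory C]

lemma aux_conj (P Q : C) (w : P ⊗ Q ≅ 𝟙_ C) {A B : C} (v : A ⟶ B) :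
    (λ_ A).inv ≫ (w.inv ▷ A) ≫ (α_ P Q A).hom ≫ (P ◁ (Q ◁ v)) ≫ (α_ P Q B).inv ≫
      (w.hom ▷ B) ≫ (λ_ B).hom = v := by
  have h1 : (α_ P Q A).hom ≫ (P ◁ (Q ◁ v)) ≫ (α_ P Q B).inv = (P ⊗ Q) ◁ v := by
    rw [← associator_naturality_right_assoc, Iso.hom_inv_id, Category.comp_id]
  slice_lhs 3 5 => rw [h1]
  slice_lhs 2 3 => rw [← whisker_exchange]
  simp

lemma aux_wl_zero [Preadditive C] [MonoidalPreadditive C]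
    (P Q : C) (w : P ⊗ Q ≅ 𝟙_ C) {A B : C} (v : A ⟶ B) (h : Q ◁ v = 0) : v = 0 := by
  rw [← aux_conj P Q w v, h]
  simp

lemma aux_wl_iso (P Q : C) (w : P ⊗ Q ≅ 𝟙_ C) {A B : C} (v : A ⟶ B)
    (h : IsIso (Q ◁ v)) : IsIso v := by
  rw [← aux_conj P Q w v]
  have : IsIso (P ◁ (Q ◁ v)) := (whiskerLeftIso P (asIso (Q ◁ v))).isIso_hom
  infer_instance

lemma aux_notZero_tensor [Preadditive C] [MonoidalPreadditive C]
    (S Sd X : C) (wε : Sd ⊗ S ≅ 𝟙_ C) (hX : ¬ IsZero X) : ¬ IsZero (S ⊗ X) := by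
  intro hz
  apply hX
  have hz2 : IsZero (Sd ⊗ (S ⊗ X)) := by
    rw [IsZero.iff_id_eq_zero] at hz ⊢
    rw [← MonoidalCategory.whiskerLeft_id, hz]
    simp
  exact hz2.of_iso ((α_ Sd S X).symm ≪≫ whiskerRightIso wε X ≪≫ λ_ X).symm

lemma aux_iso_ne_zero [Limits.HasZeroMorphisms C] {X Y : C} (f : X ⟶ Y) (h : IsIso f)
    (hY : ¬ IsZero Y) : f ≠ 0 := by
  intro h0
  rw [h0] at h
  exact hY (IsZero.iff_id_eq_zero _ |>.2 ((isIsoZeroEquiv X Y) h).2)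

lemma aux_simple_tensor [Preadditive C] [MonoidalPreadditive C] [HasKernels C]
    [∀ X : C, PreservesFiniteLimits (tensorLeft X)]
    (S Sd X : C) (wε : Sd ⊗ S ≅ 𝟙_ C) (wη : S ⊗ Sd ≅ 𝟙_ C) [Simple X] :
    Simple (S ⊗ X) := by
  constructor
  intro Y f hm
  have hmono : Mono (Sd ◁ f) := by
    have : Mono ((tensorLeft Sd).map f) := (tensorLeft Sd).map_mono f
    simpa using this
  set j : Sd ⊗ (S ⊗ X) ≅ X :=
    (α_ Sd S X).symm ≪≫ whiskerRightIso wε X ≪≫ λ_ X with hj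
  constructor
  · intro hiso h0
    rw [h0] at hiso
    exact aux_notZero_tensor S Sd X wε (Simple.not_isZero X)
      (IsZero.iff_id_eq_zero _ |>.2 ((isIsoZeroEquiv Y (S ⊗ X)) hiso).2)
  · intro hne
    have hF : (Sd ◁ f) ≫ j.hom ≠ 0 := by
      intro h0
      have hz : Sd ◁ f = 0 := by
        have := congrArg (· ≫ j.inv) h0
        simpa using this
      exact hne (aux_wl_zero S Sd wη f hz)
    have : Mono ((Sd ◁ f) ≫ j.hom) := mono_comp _ _
    have hiso : IsIso ((Sd ◁ f) ≫ j.hom) := isIso_of_mono_of_nonzero hF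
    have : IsIso (Sd ◁ f) := by
      have h2 : IsIso (((Sd ◁ f) ≫ j.hom) ≫ j.inv) := inferInstance
      simpa using h2
    exact aux_wl_iso S Sd wη f this

end AuxMonoidal

section AuxBiproduct
variable {C : Type*} [Category C] [MonoidalCategory C] [Preadditive C] [MonoidalPreadditive C]
  [HasFiniteBiproducts C]
variable {G : Type*} [Fintype G] [DecidableEq G]

lemma aux_total {J : Type*} [Fintype J] [DecidableEq J] (f : J → C) [HasBiproduct f] :
    ∑ j : J, biproduct.π f j ≫ biproduct.ι f j = 𝟙 (⨁ f) := by
  apply biproduct.hom_ext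
  intro j
  rw [Preadditive.sum_comp]
  simp [biproduct.ι_π, comp_dite]

lemma aux_p_u_total {X : C} (S : G → C) (φ : X ≅ ⨁ S) :
    (∑ g : G, (φ.hom ≫ biproduct.π S g) ≫ (biproduct.ι S g ≫ φ.inv)) = 𝟙 X := by
  have h : φ.hom ≫ (∑ g : G, biproduct.π S g ≫ biproduct.ι S g) ≫ φ.inv
      = ∑ g : G, (φ.hom ≫ biproduct.π S g) ≫ (biproduct.ι S g ≫ φ.inv) := by
    rw [Preadditive.sum_comp, Preadditive.comp_sum]
    simp only [Category.assoc]
  rw [← h, aux_total]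
  simp

lemma aux_expand {X : C} (S : G → C) (φ : X ≅ ⨁ S) (M : C) {Z : C} (y : Z ⟶ X ⊗ M) :
    y = ∑ g : G, y ≫ ((φ.hom ≫ biproduct.π S g) ▷ M) ≫ ((biproduct.ι S g ≫ φ.inv) ▷ M) := by
  conv_lhs => rw [← Category.comp_id y, ← MonoidalCategory.id_whiskerRight,
    ← aux_p_u_total S φ]
  rw [CategoryTheory.sum_whiskerRight, Preadditive.comp_sum]
  simp only [MonoidalCategory.comp_whiskerRight, Category.assoc]

lemma aux_key (E : Mon C) (S : G → C) (φ : E.X ≅ ⨁ S) (M : C) (h g k : G) :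
    (S h ◁ ((biproduct.ι S g ≫ φ.inv) ▷ M)) ≫ ((biproduct.ι S h ≫ φ.inv) ▷ (E.X ⊗ M)) ≫
      (α_ E.X E.X M).inv ≫ (E.mon.mul ▷ M) ≫ ((φ.hom ≫ biproduct.π S k) ▷ M)
    = (α_ (S h) (S g) M).inv ≫
      ((((biproduct.ι S h ≫ φ.inv) ⊗ₘ (biproduct.ι S g ≫ φ.inv)) ≫ E.mon.mul ≫ φ.hom ≫
        biproduct.π S k) ▷ M) := by
  slice_lhs 1 2 => rw [whisker_exchange]
  slice_lhs 2 3 => rw [associator_inv_naturality_middle]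
  slice_lhs 1 2 => rw [associator_inv_naturality_left]
  simp only [Category.assoc, ← MonoidalCategory.comp_whiskerRight]
  rw [← tensorHom_def_assoc]

end AuxBiproduct

section AuxMod
variable {C : Type*} [Category C] [MonoidalCategory C] [Preadditive C] [MonoidalPreadditive C]
variable {E : Mon C}

lemma aux_act_hom {P Q : Mod C E.X} (f : P ⟶ Q) :
    P.mod.smul ≫ f.hom = (E.X ◁ f.hom) ≫ Q.mod.smul := f.isModHom.smul_hom

lemma aux_assoc (P : Mod C E.X) :
    (E.mon.mul ▷ P.X) ≫ P.mod.smul =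
      (α_ E.X E.X P.X).hom ≫ (E.X ◁ P.mod.smul) ≫ P.mod.smul := ModObj.mul_smul (M := E.X) P.X

lemma aux_one_act (P : Mod C E.X) :
    (E.mon.one ▷ P.X) ≫ P.mod.smul = (λ_ P.X).hom := ModObj.one_smul (M := E.X) P.X

lemma aux_assoc_flip (P : Mod C E.X) :
    (E.X ◁ P.mod.smul) ≫ P.mod.smul =
      (α_ E.X E.X P.X).inv ≫ (E.mon.mul ▷ P.X) ≫ P.mod.smul := by
  rw [aux_assoc]; simp

lemma aux_freeMod_smul {M : C} :
    (freeMod E M).mod.smul = (α_ E.X E.X M).inv ≫ (E.mon.mul ▷ M) := rfl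

instance aux_freeModObj (E : Mon C) (M : C) : ModObj E.X (freeMod E M).X := (freeMod E M).mod

/-- build a module from the action map -/
@[reducible]
def aux_mkMod (X : C) (act : E.X ⊗ X ⟶ X) (one_act : (E.mon.one ▷ X) ≫ act = (λ_ X).hom)
    (assoc : (E.mon.mul ▷ X) ≫ act = (α_ E.X E.X X).hom ≫ (E.X ◁ act) ≫ act) :
    Mod C E.X where
  X := X
  mod := { smul := act, one_smul := one_act, mul_smul := assoc }

/-- The zero morphism of module objects. -/
def modZeroHom (P Q : Mod C E.X) : P ⟶ Q where
  hom := 0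
  isModHom := ⟨by
    show P.mod.smul ≫ 0 = (E.X ◁ (0 : P.X ⟶ Q.X)) ≫ Q.mod.smul
    simp⟩

lemma aux_isZero_X {P : Mod C E.X} (h : IsZero P) : IsZero P.X := by
  rw [IsZero.iff_id_eq_zero]
  have h1 : (𝟙 P : P ⟶ P) = modZeroHom P P := h.eq_of_src _ _
  have := congrArg Mod.Hom.hom h1
  simpa [modZeroHom] using this

lemma aux_isZero_mod {P : Mod C E.X} (h : IsZero P.X) : IsZero P := by
  constructor
  · intro Q
    refine ⟨⟨⟨modZeroHom P Q⟩, ?_⟩⟩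
    intro a
    apply Mod.hom_ext
    exact h.eq_of_src _ _
  · intro Q
    refine ⟨⟨⟨modZeroHom Q P⟩, ?_⟩⟩
    intro a
    apply Mod.hom_ext
    exact h.eq_of_tgt _ _

/-- kernel of the underlying morphism, as a module -/
noncomputable def modKernel [HasKernels C] {P Q : Mod C E.X} (f : P ⟶ Q) : Mod C E.X :=
  aux_mkMod (kernel f.hom)
    (kernel.lift f.hom ((E.X ◁ kernel.ι f.hom) ≫ P.mod.smul) (by
    rw [Category.assoc, aux_act_hom f, ← Category.assoc, ← MonoidalCategory.whiskerLeft_comp]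
    simp))
  (by
    rw [← cancel_mono (kernel.ι f.hom)]
    rw [Category.assoc, kernel.lift_ι]
    rw [← Category.assoc, ← whisker_exchange]
    simp [aux_one_act])
  (by
    rw [← cancel_mono (kernel.ι f.hom)]
    simp only [Category.assoc, kernel.lift_ι]
    rw [← MonoidalCategory.whiskerLeft_comp_assoc, kernel.lift_ι]
    rw [MonoidalCategory.whiskerLeft_comp_assoc]
    rw [← associator_naturality_right_assoc]
    slice_lhs 1 2 => rw [← whisker_exchange]
    slice_lhs 2 3 => rw [aux_assoc P])

lemma aux_mono_hom [HasKernels C] {P Q : Mod C E.X} (f : P ⟶ Q) [Mono f] : Mono f.hom := by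
  have hk : ({ hom := kernel.ι f.hom, isModHom := ⟨by
      show (modKernel f).mod.smul ≫ kernel.ι f.hom = (E.X ◁ kernel.ι f.hom) ≫ P.mod.smul
      exact kernel.lift_ι _ _ _⟩ } : modKernel f ⟶ P) ≫ f =
      modZeroHom _ _ ≫ f := by
    apply Mod.hom_ext
    exact (kernel.condition f.hom).trans zero_comp.symm
  have h1 := (cancel_mono f).mp hk
  have h0 : kernel.ι f.hom = 0 := congrArg Mod.Hom.hom h1
  exact Preadditive.mono_of_kernel_zero h0

/-- Frobenius reciprocity morphism -/
def frobHom (E : Mon C) {M : C} (P : Mod C E.X) (χ : M ⟶ P.X) : freeMod E M ⟶ P where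
  hom := (E.X ◁ χ) ≫ P.mod.smul
  isModHom := ⟨by
    show ((α_ E.X E.X M).inv ≫ (E.mon.mul ▷ M)) ≫ (E.X ◁ χ) ≫ P.mod.smul =
      (E.X ◁ ((E.X ◁ χ) ≫ P.mod.smul)) ≫ P.mod.smul
    rw [MonoidalCategory.whiskerLeft_comp, Category.assoc, Category.assoc, aux_assoc_flip]
    slice_lhs 2 3 => rw [← whisker_exchange]
    slice_lhs 1 2 => rw [← associator_inv_naturality_right]
    simp⟩

lemma frob_recover (E : Mon C) {M : C} (P : Mod C E.X) (Θ : freeMod E M ⟶ P) :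
    Θ.hom = (E.X ◁ ((λ_ M).inv ≫ (E.mon.one ▷ M) ≫ Θ.hom)) ≫ P.mod.smul := by
  have h := aux_act_hom Θ
  dsimp [aux_freeMod_smul, freeMod] at h
  rw [MonoidalCategory.whiskerLeft_comp, MonoidalCategory.whiskerLeft_comp, Category.assoc,
    Category.assoc]
  rw [← h]
  dsimp [aux_freeMod_smul, freeMod]
  slice_rhs 2 3 => rw [associator_inv_naturality_middle]
  slice_rhs 3 4 => rw [← comp_whiskerRight, MonObj.mul_one]
  have tri : (E.X ◁ (λ_ M).inv) ≫ (α_ E.X (𝟙_ C) M).inv ≫ ((ρ_ E.X).hom ▷ M) = 𝟙 _ := by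
    monoidal
  slice_rhs 1 3 => rw [tri]
  simp

end AuxMod

/-- **Induction of simple objects along a categorical simple current extension is simple.**
Let `C` be a `ℂ`-linear abelian braided monoidal category with simple unit, biexact
tensor product, finite-dimensional Hom-spaces, all of whose objects have finite length
(Noetherian and Artinian).  Let `G` be a finite abelian group, `{S_g}` a family of simple
invertible objects with `S_e ≅ 𝟙`, and `E` a commutative algebra object with underlying
object `⨁_g S_g`, unit the inclusion of the summand `S_e`, and multiplication restricting
to nonzero morphisms `S_g ⊗ S_h ⟶ S_{gh}` (S1), such that the `G`-action on isomorphism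
classes of simple objects is fixed-point free (S2).  Then for every simple object `M` of
`C`, the induced module `F(M) = E ⊗ M` is a simple `E`-module. -/
theorem stmt_6 {C : Type*} [Category C] [Abelian C] [CategoryTheory.Linear ℂ C]
    [MonoidalCategory C] [BraidedCategory C] [MonoidalPreadditive C] [MonoidalLinear ℂ C]
    [Simple (𝟙_ C)]
    [∀ X : C, PreservesFiniteLimits (tensorLeft X)]
    [∀ X : C, PreservesFiniteColimits (tensorLeft X)]
    [∀ X : C, PreservesFiniteLimits (tensorRight X)]
    [∀ X : C, PreservesFiniteColimits (tensorRight X)]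
    (hfd : ∀ X Y : C, FiniteDimensional ℂ (X ⟶ Y))
    (hfl : ∀ X : C, IsNoetherianObject X ∧ IsArtinianObject X)
    (G : Type*) [CommGroup G] [Fintype G]
    (S : G → C) (hSsimple : ∀ g : G, Simple (S g))
    (Sd : G → C) [∀ g : G, ExactPairing (S g) (Sd g)]
    (hev : ∀ g : G, IsIso (ε_ (S g) (Sd g))) (hcoev : ∀ g : G, IsIso (η_ (S g) (Sd g)))
    (Se : S 1 ≅ 𝟙_ C)
    (E : Mon C)
    (φ : letI : HasFiniteBiproducts C := Abelian.hasFiniteBiproducts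
         E.X ≅ ⨁ S)
    (hcomm : (β_ E.X E.X).hom ≫ E.mon.mul = E.mon.mul)
    (hone : letI : HasFiniteBiproducts C := Abelian.hasFiniteBiproducts
      E.mon.one = Se.inv ≫ biproduct.ι S 1 ≫ φ.inv)
    (hS1 : letI : HasFiniteBiproducts C := Abelian.hasFiniteBiproducts
      ∀ g h : G,
        ((biproduct.ι S g ≫ φ.inv) ⊗ₘ (biproduct.ι S h ≫ φ.inv)) ≫ E.mon.mul ≫ φ.hom ≫
            biproduct.π S (g * h) ≠ 0)
    (hS2 : ∀ (g : G) (M : C), Simple M → Nonempty (S g ⊗ M ≅ M) → g = 1) :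
    ∀ M : C, Simple M → IsSimpleMod (freeMod E M) := by
  letI : HasFiniteBiproducts C := Abelian.hasFiniteBiproducts
  letI := Classical.decEq G
  intro M hM
  haveI := hM
  have hST : ∀ (g : G) (X : C), Simple X → Simple (S g ⊗ X) := by
    intro g X hX
    haveI := hX
    haveI := hev g
    haveI := hcoev g
    exact aux_simple_tensor (S g) (Sd g) X (asIso (ε_ (S g) (Sd g)))
      (asIso (η_ (S g) (Sd g))).symm
  have hν : ∀ h g : G, IsIso (((biproduct.ι S h ≫ φ.inv) ⊗ₘ (biproduct.ι S g ≫ φ.inv)) ≫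
      E.mon.mul ≫ φ.hom ≫ biproduct.π S (h * g)) := by
    intro h g
    haveI := hST h (S g) (hSsimple g)
    haveI := hSsimple (h * g)
    exact isIso_of_hom_simple (hS1 h g)
  have hcross : ∀ h g k : G, k ≠ h * g →
      ((biproduct.ι S h ≫ φ.inv) ⊗ₘ (biproduct.ι S g ≫ φ.inv)) ≫ E.mon.mul ≫ φ.hom ≫
        biproduct.π S k = 0 := by
    intro h g k hk
    by_contra hnz
    haveI := hST h (S g) (hSsimple g)
    haveI := hSsimple k
    haveI := isIso_of_hom_simple hnz
    haveI := hν (k * (h * g)⁻¹) (h * g)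
    have e2 : k * (h * g)⁻¹ * (h * g) = k := inv_mul_cancel_right k (h * g)
    have iso2 : S (k * (h * g)⁻¹) ⊗ S (h * g) ≅ S (h * g) :=
      asIso (((biproduct.ι S (k * (h * g)⁻¹) ≫ φ.inv) ⊗ₘ (biproduct.ι S (h * g) ≫ φ.inv)) ≫
          E.mon.mul ≫ φ.hom ≫ biproduct.π S (k * (h * g)⁻¹ * (h * g))) ≪≫
        eqToIso (congrArg S e2) ≪≫
        (asIso (((biproduct.ι S h ≫ φ.inv) ⊗ₘ (biproduct.ι S g ≫ φ.inv)) ≫ E.mon.mul ≫ φ.hom ≫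
          biproduct.π S k)).symm ≪≫
        asIso (((biproduct.ι S h ≫ φ.inv) ⊗ₘ (biproduct.ι S g ≫ φ.inv)) ≫ E.mon.mul ≫ φ.hom ≫
          biproduct.π S (h * g))
    have := hS2 (k * (h * g)⁻¹) (S (h * g)) (hSsimple _) ⟨iso2⟩
    exact hk (mul_inv_eq_one.mp this)
  constructor
  · -- the induced module is not zero
    intro hz
    have hzx : IsZero ((freeMod E M).X) := aux_isZero_X hz
    have h1 : ((biproduct.ι S 1 ≫ φ.inv) ▷ M) = 0 := hzx.eq_of_tgt _ _
    have hid : 𝟙 (S 1 ⊗ M) =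
        ((biproduct.ι S 1 ≫ φ.inv) ▷ M) ≫ ((φ.hom ≫ biproduct.π S 1) ▷ M) := by
      rw [← MonoidalCategory.comp_whiskerRight]
      rw [show (biproduct.ι S 1 ≫ φ.inv) ≫ (φ.hom ≫ biproduct.π S 1) = 𝟙 (S 1) by simp]
      simp
    rw [h1, zero_comp] at hid
    have hzT : IsZero (S 1 ⊗ M) := IsZero.iff_id_eq_zero _ |>.2 hid
    exact Simple.not_isZero M (hzT.of_iso (whiskerRightIso Se M ≪≫ λ_ M).symm)
  · intro P f hf
    by_cases hP : IsZero P
    · exact Or.inr hP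
    refine Or.inl ?_
    haveI := hf
    have hmono : Mono f.hom := aux_mono_hom f
    have hPX : ¬ IsZero P.X := fun h => hP (aux_isZero_mod h)
    haveI : IsArtinianObject P.X := (hfl P.X).2
    obtain ⟨N, hN⟩ := exists_simple_subobject hPX
    haveI := hN
    have harr : (Subobject.arrow N) ≠ 0 := by
      intro h0
      have hid : 𝟙 (N : C) = 0 := by
        rw [← cancel_mono (Subobject.arrow N)]
        simp [h0]
      exact Simple.not_isZero (N : C) (IsZero.iff_id_eq_zero _ |>.2 hid)
    have hw : (Subobject.arrow N) ≫ f.hom ≠ 0 := fun h0 =>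
      harr ((cancel_mono f.hom).mp (by rw [h0]; simp))
    have hex : ∃ g : G,
        (Subobject.arrow N ≫ f.hom) ≫ ((φ.hom ≫ biproduct.π S g) ▷ M) ≠ 0 := by
      by_contra hall
      push_neg at hall
      apply hw
      rw [aux_expand S φ M (Subobject.arrow N ≫ f.hom)]
      refine Finset.sum_eq_zero ?_
      intro b _
      rw [← Category.assoc, hall b, zero_comp]
    obtain ⟨g, hg⟩ := hex
    haveI hSTg : Simple (S g ⊗ M) := hST g M hM
    haveI hS1M : Simple (S 1 ⊗ M) := hST 1 M hM
    haveI hθiso : IsIso ((Subobject.arrow N ≫ f.hom) ≫ ((φ.hom ≫ biproduct.π S g) ▷ M)) :=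
      isIso_of_hom_simple hg
    set n : S g ⊗ M ⟶ P.X :=
      inv ((Subobject.arrow N ≫ f.hom) ≫ ((φ.hom ≫ biproduct.π S g) ▷ M)) ≫
        Subobject.arrow N with hn
    have hn'p : (n ≫ f.hom) ≫ ((φ.hom ≫ biproduct.π S g) ▷ M) = 𝟙 (S g ⊗ M) := by
      have h5 : (n ≫ f.hom) ≫ ((φ.hom ≫ biproduct.π S g) ▷ M) =
          inv ((Subobject.arrow N ≫ f.hom) ≫ ((φ.hom ≫ biproduct.π S g) ▷ M)) ≫
          ((Subobject.arrow N ≫ f.hom) ≫ ((φ.hom ≫ biproduct.π S g) ▷ M)) := by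
        rw [hn]; simp only [Category.assoc]
      rw [h5, IsIso.inv_hom_id]
    -- the multiplication component at (g⁻¹, g), landing in S 1
    have hν1 : IsIso (((biproduct.ι S g⁻¹ ≫ φ.inv) ⊗ₘ (biproduct.ι S g ≫ φ.inv)) ≫
        E.mon.mul ≫ φ.hom ≫ biproduct.π S 1) := by
      have e1 : g⁻¹ * g = 1 := inv_mul_cancel g
      have h2 := hν g⁻¹ g
      rw [e1] at h2
      exact h2
    haveI := hν1
    -- key component computation
    have hTb : ∀ b : G,
        (S g⁻¹ ◁ ((n ≫ f.hom) ≫ ((φ.hom ≫ biproduct.π S b) ▷ M) ≫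
          ((biproduct.ι S b ≫ φ.inv) ▷ M))) ≫
          ((biproduct.ι S g⁻¹ ≫ φ.inv) ▷ (E.X ⊗ M)) ≫ (α_ E.X E.X M).inv ≫
          (E.mon.mul ▷ M) ≫ ((φ.hom ≫ biproduct.π S 1) ▷ M)
        = if b = g then (α_ (S g⁻¹) (S g) M).inv ≫
            ((((biproduct.ι S g⁻¹ ≫ φ.inv) ⊗ₘ (biproduct.ι S g ≫ φ.inv)) ≫ E.mon.mul ≫ φ.hom ≫
              biproduct.π S 1) ▷ M)
          else 0 := by
      intro b
      by_cases hb : b = g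
      · subst hb
        rw [if_pos rfl]
        rw [show (n ≫ f.hom) ≫ ((φ.hom ≫ biproduct.π S b) ▷ M) ≫
            ((biproduct.ι S b ≫ φ.inv) ▷ M) = (biproduct.ι S b ≫ φ.inv) ▷ M from by
          rw [← Category.assoc, hn'p, Category.id_comp]]
        exact aux_key E S φ M b⁻¹ b 1
      · rw [if_neg hb]
        rw [MonoidalCategory.whiskerLeft_comp, MonoidalCategory.whiskerLeft_comp]
        simp only [Category.assoc]
        simp only [MonoidalCategory.whiskerLeft_comp, Category.assoc]
        rw [aux_key E S φ M g⁻¹ b 1]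
        rw [hcross g⁻¹ b 1 (fun h1 => hb (inv_mul_eq_one.mp h1.symm).symm)]
        simp
    have hT : (S g⁻¹ ◁ (n ≫ f.hom)) ≫ ((biproduct.ι S g⁻¹ ≫ φ.inv) ▷ (E.X ⊗ M)) ≫
        (α_ E.X E.X M).inv ≫ (E.mon.mul ▷ M) ≫ ((φ.hom ≫ biproduct.π S 1) ▷ M)
        = (α_ (S g⁻¹) (S g) M).inv ≫
          ((((biproduct.ι S g⁻¹ ≫ φ.inv) ⊗ₘ (biproduct.ι S g ≫ φ.inv)) ≫ E.mon.mul ≫ φ.hom ≫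
            biproduct.π S 1) ▷ M) := by
      conv_lhs => rw [aux_expand S φ M (n ≫ f.hom)]
      rw [CategoryTheory.whiskerLeft_sum, Preadditive.sum_comp]
      rw [Finset.sum_congr rfl (fun b _ => hTb b)]
      simp
    have hmod : (S g⁻¹ ◁ n) ≫ ((biproduct.ι S g⁻¹ ≫ φ.inv) ▷ P.X) ≫ P.mod.smul ≫ f.hom
        = (S g⁻¹ ◁ (n ≫ f.hom)) ≫ ((biproduct.ι S g⁻¹ ≫ φ.inv) ▷ (E.X ⊗ M)) ≫
          (α_ E.X E.X M).inv ≫ (E.mon.mul ▷ M) := by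
      rw [aux_act_hom f]
      slice_lhs 2 3 => rw [← whisker_exchange]
      simp only [Category.assoc]
      rw [← MonoidalCategory.whiskerLeft_comp_assoc]
      rfl
    have hcomb : (S g⁻¹ ◁ n) ≫ ((biproduct.ι S g⁻¹ ≫ φ.inv) ▷ P.X) ≫ P.mod.smul ≫ f.hom ≫
        ((φ.hom ≫ biproduct.π S 1) ▷ M)
        = (α_ (S g⁻¹) (S g) M).inv ≫
          ((((biproduct.ι S g⁻¹ ≫ φ.inv) ⊗ₘ (biproduct.ι S g ≫ φ.inv)) ≫ E.mon.mul ≫ φ.hom ≫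
            biproduct.π S 1) ▷ M) := by
      have h2 := congrArg (fun t => t ≫ ((φ.hom ≫ biproduct.π S 1) ▷ M)) hmod
      simp only [Category.assoc] at h2
      rw [h2, hT]
    -- the iso M ≅ S g⁻¹ ⊗ (S g ⊗ M)
    set ρi : M ≅ S g⁻¹ ⊗ (S g ⊗ M) :=
      (λ_ M).symm ≪≫ whiskerRightIso
        ((asIso (((biproduct.ι S g⁻¹ ≫ φ.inv) ⊗ₘ (biproduct.ι S g ≫ φ.inv)) ≫
          E.mon.mul ≫ φ.hom ≫ biproduct.π S 1) ≪≫ Se).symm) M ≪≫ α_ (S g⁻¹) (S g) M with hρ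
    set χ : M ⟶ P.X :=
      ρi.hom ≫ (S g⁻¹ ◁ n) ≫ ((biproduct.ι S g⁻¹ ≫ φ.inv) ▷ P.X) ≫ P.mod.smul with hχ
    have hξp : (χ ≫ f.hom) ≫ ((φ.hom ≫ biproduct.π S 1) ▷ M) ≠ 0 := by
      rw [hχ]
      simp only [Category.assoc]
      rw [hcomb]
      apply aux_iso_ne_zero
      · haveI : IsIso ((((biproduct.ι S g⁻¹ ≫ φ.inv) ⊗ₘ (biproduct.ι S g ≫ φ.inv)) ≫
            E.mon.mul ≫ φ.hom ≫ biproduct.π S 1) ▷ M) :=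
          (whiskerRightIso (asIso (((biproduct.ι S g⁻¹ ≫ φ.inv) ⊗ₘ
            (biproduct.ι S g ≫ φ.inv)) ≫ E.mon.mul ≫ φ.hom ≫ biproduct.π S 1)) M).isIso_hom
        infer_instance
      · exact Simple.not_isZero (S 1 ⊗ M)
    -- the Frobenius endomorphism
    set Θ : freeMod E M ⟶ freeMod E M := frobHom E P χ ≫ f with hΘdef
    have hΘhom : Θ.hom = (E.X ◁ (χ ≫ f.hom)) ≫ (α_ E.X E.X M).inv ≫ (E.mon.mul ▷ M) := by
      rw [hΘdef]
      show (frobHom E P χ).hom ≫ f.hom = _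
      dsimp only [frobHom]
      simp only [Category.assoc]
      rw [aux_act_hom f]
      rw [← MonoidalCategory.whiskerLeft_comp_assoc]
      rfl
    have hzΘ : (λ_ M).inv ≫ (E.mon.one ▷ M) ≫ Θ.hom = χ ≫ f.hom := by
      rw [hΘhom]
      rw [← whisker_exchange_assoc]
      have h1 : (E.mon.one ▷ ((freeMod E M).X)) ≫ (α_ E.X E.X M).inv ≫ (E.mon.mul ▷ M) =
          (λ_ ((freeMod E M).X)).hom := aux_one_act (freeMod E M)
      rw [h1]
      simp
    have hcomp0 : ∀ b : G, b ≠ 1 →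
        (χ ≫ f.hom) ≫ ((φ.hom ≫ biproduct.π S b) ▷ M) = 0 := by
      intro b hb
      by_contra hnz
      haveI : Simple (S b ⊗ M) := hST b M hM
      haveI := isIso_of_hom_simple hnz
      exact hb (hS2 b M hM
        ⟨(asIso ((χ ≫ f.hom) ≫ ((φ.hom ≫ biproduct.π S b) ▷ M))).symm⟩)
    haveI := hfd M M
    obtain ⟨c, hc⟩ := endomorphism_simple_eq_smul_id (𝕜 := ℂ)
      (((χ ≫ f.hom) ≫ ((φ.hom ≫ biproduct.π S 1) ▷ M)) ≫ (whiskerRightIso Se M ≪≫ λ_ M).hom)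
    have hξ : χ ≫ f.hom = c • ((λ_ M).inv ≫ (E.mon.one ▷ M)) := by
      rw [aux_expand S φ M (χ ≫ f.hom)]
      rw [Finset.sum_eq_single 1 (fun b _ hb => by
        rw [← Category.assoc, hcomp0 b hb, zero_comp]) (by simp)]
      have h2 : (χ ≫ f.hom) ≫ ((φ.hom ≫ biproduct.π S 1) ▷ M) =
          c • (whiskerRightIso Se M ≪≫ λ_ M).inv := by
        calc (χ ≫ f.hom) ≫ ((φ.hom ≫ biproduct.π S 1) ▷ M)
            = (((χ ≫ f.hom) ≫ ((φ.hom ≫ biproduct.π S 1) ▷ M)) ≫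
                (whiskerRightIso Se M ≪≫ λ_ M).hom) ≫
                (whiskerRightIso Se M ≪≫ λ_ M).inv := by simp
          _ = (c • 𝟙 M) ≫ (whiskerRightIso Se M ≪≫ λ_ M).inv := by rw [hc]
          _ = c • (whiskerRightIso Se M ≪≫ λ_ M).inv := by
              rw [Linear.smul_comp, Category.id_comp]
      rw [← Category.assoc, h2, Linear.smul_comp]
      congr 1
      show ((λ_ M).inv ≫ (Se.inv ▷ M)) ≫ ((biproduct.ι S 1 ≫ φ.inv) ▷ M) =
        (λ_ M).inv ≫ (E.mon.one ▷ M)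
      rw [hone]
      simp [MonoidalCategory.comp_whiskerRight]
    have hid2 : (E.X ◁ ((λ_ M).inv ≫ (E.mon.one ▷ M))) ≫ (freeMod E M).mod.smul = 𝟙 (E.X ⊗ M) := by
      have h3 := (frob_recover E (freeMod E M) (𝟙 (freeMod E M))).symm
      rw [Mod.id_hom'] at h3
      rw [show (E.mon.one ▷ M) ≫ 𝟙 ((freeMod E M).X) = E.mon.one ▷ M from Category.comp_id _] at h3
      exact h3
    have hΘc : Θ.hom = c • 𝟙 (E.X ⊗ M) := by
      have hrec := frob_recover E (freeMod E M) Θ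
      rw [hzΘ, hξ] at hrec
      rw [hrec, MonoidalLinear.whiskerLeft_smul, Linear.smul_comp, hid2]
    have hcne : c ≠ 0 := by
      intro h0
      apply hξp
      rw [hξ, h0, zero_smul, zero_comp]
    set r : freeMod E M ⟶ P := { hom := c⁻¹ • (frobHom E P χ).hom, isModHom := ⟨by
      show (freeMod E M).mod.smul ≫ (c⁻¹ • (frobHom E P χ).hom) =
        (E.X ◁ (c⁻¹ • (frobHom E P χ).hom)) ≫ P.mod.smul
      simp only [Linear.comp_smul, Linear.smul_comp, MonoidalLinear.whiskerLeft_smul]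
      rw [aux_act_hom (frobHom E P χ)]⟩ } with hrdef
    have hrf : r ≫ f = 𝟙 (freeMod E M) := by
      apply Mod.hom_ext
      rw [Mod.comp_hom', Mod.id_hom', hrdef]
      show (c⁻¹ • (frobHom E P χ).hom) ≫ f.hom = 𝟙 ((freeMod E M).X)
      rw [Linear.smul_comp]
      have hΘh2 : (frobHom E P χ).hom ≫ f.hom = Θ.hom := by rw [hΘdef]; rfl
      rw [hΘh2, hΘc, smul_smul, inv_mul_cancel₀ hcne, one_smul]
    haveI : IsSplitEpi f := IsSplitEpi.mk' ⟨r, hrf⟩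
    exact isIso_of_mono_of_isSplitEpi f
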